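/- If (Λ,p) and (Ω,q) are equivalent multifoliate structures on {1,…,n}, then the partially ordered sets Λ and Ω are order-isomorphic. -/
import Mathlib


/-! Common definitions: projective systems of finite-dimensional real vector
spaces over a poset, their limits, the groups `GL(ξ)`, invariant subspaces,
completeness, completions, and multifoliate structures. -/

structure ProjSys (Λ : Type) [PartialOrder Λ] where
  L : Λ → Type
  [instAddCommGroup : ∀ α, AddCommGroup (L α)]
  [instModule : ∀ α, Module ℝ (L α)]
  [instFiniteDimensional : ∀ α, FiniteDimensional ℝ (L α)]
  map : ∀ {α β : Λ}, α ≤ β → (L β →ₗ[ℝ] L α)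
  map_id : ∀ α : Λ, map (le_refl α) = LinearMap.id
  map_comp : ∀ {α β γ : Λ} (h₁ : α ≤ β) (h₂ : β ≤ γ),
    (map h₁).comp (map h₂) = map (h₁.trans h₂)
  map_surj : ∀ {α β : Λ} (h : α ≤ β), Function.Surjective (map h)

attribute [instance] ProjSys.instAddCommGroup ProjSys.instModule
  ProjSys.instFiniteDimensional

namespace ProjSys

variable {Λ : Type} [PartialOrder Λ]

/-- The limit of a projective system, as a submodule of the product. -/
def limSub (ξ : ProjSys Λ) : Submodule ℝ (∀ α, ξ.L α) where
  carrier := {x | ∀ (α β : Λ) (h : α ≤ β), ξ.map h (x β) = x α}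
  add_mem' := by
    intro a b ha hb α β h
    simp only [Pi.add_apply, map_add, ha α β h, hb α β h]
  zero_mem' := by
    intro α β h
    simp only [Pi.zero_apply, map_zero]
  smul_mem' := by
    intro c a ha α β h
    simp only [Pi.smul_apply, map_smul, ha α β h]

/-- The canonical projection from the limit to the `α`-th space. -/
def proj (ξ : ProjSys Λ) (α : Λ) : ↥ξ.limSub →ₗ[ℝ] ξ.L α :=
  (LinearMap.proj α : (∀ β, ξ.L β) →ₗ[ℝ] ξ.L α).comp ξ.limSub.subtype

/-- `GL(ξ)`: the linear automorphisms of the limit that cover automorphisms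
of every space of the system. -/
def GLset (ξ : ProjSys Λ) : Set (↥ξ.limSub ≃ₗ[ℝ] ↥ξ.limSub) :=
  {f | ∀ α : Λ, ∃ fα : ξ.L α ≃ₗ[ℝ] ξ.L α,
    ∀ x : ↥ξ.limSub, ξ.proj α (f x) = fα (ξ.proj α x)}

/-- A subspace of the limit is invariant if every element of `GL(ξ)`
maps it into itself. -/
def Invariant (ξ : ProjSys Λ) (K : Submodule ℝ ↥ξ.limSub) : Prop :=
  ∀ f ∈ ξ.GLset, ∀ x ∈ K, f x ∈ K

/-- A projective system is complete if every finite-codimensional invariant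
subspace of the limit is the kernel of some canonical projection. -/
def Complete (ξ : ProjSys Λ) : Prop :=
  ∀ K : Submodule ℝ ↥ξ.limSub, ξ.Invariant K →
    FiniteDimensional ℝ (↥ξ.limSub ⧸ K) → ∃ α : Λ, K = LinearMap.ker (ξ.proj α)

/-- The index set of the completion: all finite-codimensional invariant
subspaces, ordered by reverse inclusion. -/
def CompletionIndex (ξ : ProjSys Λ) : Type :=
  {K : Submodule ℝ ↥ξ.limSub //
    ξ.Invariant K ∧ FiniteDimensional ℝ (↥ξ.limSub ⧸ K)}

instance (ξ : ProjSys Λ) : PartialOrder ξ.CompletionIndex :=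
  PartialOrder.lift (fun a => OrderDual.toDual a.1)
    (fun _ _ h => Subtype.ext (congrArg OrderDual.ofDual h))

/-- The completion of a projective system: the quotients by all
finite-codimensional invariant subspaces, with the canonical epimorphisms. -/
noncomputable def completion (ξ : ProjSys Λ) : ProjSys ξ.CompletionIndex where
  L a := ↥ξ.limSub ⧸ a.1
  instAddCommGroup := fun _ => inferInstance
  instModule := fun _ => inferInstance
  instFiniteDimensional := fun a => a.2.2
  map := fun {a b} h => Submodule.mapQ b.1 a.1 LinearMap.id
    (by rw [Submodule.comap_id]; exact h)
  map_id := by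
    intro a
    apply Submodule.linearMap_qext
    ext x
    simp [Submodule.mapQ_apply]
  map_comp := by
    intro a b c h₁ h₂
    apply Submodule.linearMap_qext
    ext x
    simp [Submodule.mapQ_apply]
  map_surj := by
    intro a b h y
    obtain ⟨x, rfl⟩ := Submodule.Quotient.mk_surjective _ y
    exact ⟨Submodule.Quotient.mk x, by simp [Submodule.mapQ_apply]⟩

/-- An isomorphism of projective systems: an order isomorphism of the index
sets together with compatible linear isomorphisms of the spaces. -/
def Isomorphic {Λ' : Type} [PartialOrder Λ'] (ξ : ProjSys Λ)
    (ξ' : ProjSys Λ') : Prop :=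
  ∃ ω : Λ ≃o Λ', ∃ ψ : ∀ α : Λ, ξ.L α ≃ₗ[ℝ] ξ'.L (ω α),
    ∀ (α β : Λ) (h : α ≤ β) (x : ξ.L β),
      ξ'.map (ω.monotone h) (ψ β x) = ψ α (ξ.map h x)

/-- Equivalence of projective systems: a linear isomorphism of the limits
conjugating `GL(ξ)` onto `GL(ξ')` (such a conjugation is automatically a
group isomorphism). -/
def Equivalent {Λ' : Type} [PartialOrder Λ'] (ξ : ProjSys Λ)
    (ξ' : ProjSys Λ') : Prop :=
  ∃ φ : ↥ξ.limSub ≃ₗ[ℝ] ↥ξ'.limSub,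
    Set.BijOn (fun f => (φ.symm.trans f).trans φ) ξ.GLset ξ'.GLset

end ProjSys

/-- `GL(Λ,p)` for a multifoliate structure `(Λ,p)` on `{1,…,n}`: the linear
automorphisms `f` of `ℝⁿ` whose matrix entries `f i j = f(e_j) i` vanish
whenever `p i ≱ p j`. -/
def GLmf {n : ℕ} {Λ : Type} [PartialOrder Λ] (p : Fin n → Λ) :
    Set ((Fin n → ℝ) ≃ₗ[ℝ] (Fin n → ℝ)) :=
  {f | ∀ i j : Fin n, ¬ p j ≤ p i → f (Pi.single j 1) i = 0}

/-- Equivalence of multifoliate structures. -/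
def MFEquiv {n : ℕ} {Λ Ω : Type} [PartialOrder Λ] [PartialOrder Ω]
    (p : Fin n → Λ) (q : Fin n → Ω) : Prop :=
  ∃ φ : (Fin n → ℝ) ≃ₗ[ℝ] (Fin n → ℝ),
    Set.BijOn (fun f => (φ.symm.trans f).trans φ) (GLmf p) (GLmf q)

/-- The projective system `ξ(Λ,p)` associated with a multifoliate structure:
the spaces `L_α = ℝ^{H_α}`, `H_α = {i : p i ≤ α}`, with the coordinate
projections. -/
noncomputable def mfSys {n : ℕ} {Λ : Type} [PartialOrder Λ] (p : Fin n → Λ) : ProjSys Λ where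
  L α := {i : Fin n // p i ≤ α} → ℝ
  instAddCommGroup := fun _ => inferInstance
  instModule := fun _ => inferInstance
  instFiniteDimensional := fun _ => inferInstance
  map := fun {α β} h => LinearMap.funLeft ℝ ℝ (fun i => ⟨i.1, i.2.trans h⟩)
  map_id := fun _ => rfl
  map_comp := fun _ _ => rfl
  map_surj := by
    intro α β h
    apply LinearMap.funLeft_surjective_of_injective
    intro i j hij
    cases i
    cases j
    simpa using hij

/-- `ker pr_α ⊆ ℝⁿ`: the vectors vanishing on all coordinates `i` with
`p i ≤ α`. -/
def kerpr {n : ℕ} {Λ : Type} [PartialOrder Λ] (p : Fin n → Λ) (α : Λ) :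
    Submodule ℝ (Fin n → ℝ) where
  carrier := {x | ∀ i : Fin n, p i ≤ α → x i = 0}
  add_mem' := by
    intro a b ha hb i hi
    simp [ha i hi, hb i hi]
  zero_mem' := by
    intro i hi
    rfl
  smul_mem' := by
    intro c a ha i hi
    simp [ha i hi]

/-- The antichains of a poset, ordered by domination. -/
def AntichainsIn (Λ : Type) [PartialOrder Λ] : Type :=
  {A : Finset Λ // IsAntichain (· ≤ ·) (A : Set Λ)}

instance {Λ : Type} [PartialOrder Λ] : LE (AntichainsIn Λ) :=
  ⟨fun A B => ∀ a ∈ A.1, ∃ b ∈ B.1, a ≤ b⟩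

/-- The `GL(Λ,p)`-invariant subspaces of `ℝⁿ`, ordered by reverse
inclusion. -/
def InvariantSubspaces {n : ℕ} {Λ : Type} [PartialOrder Λ]
    (p : Fin n → Λ) : Type :=
  {K : Submodule ℝ (Fin n → ℝ) // ∀ g ∈ GLmf p, ∀ x ∈ K, g x ∈ K}

instance {n : ℕ} {Λ : Type} [PartialOrder Λ] (p : Fin n → Λ) :
    LE (InvariantSubspaces p) :=
  ⟨fun K K' => K'.1 ≤ K.1⟩

/-- A bundled multifoliate structure on `{1,…,n}`. -/
structure MultifoliateStructure (n : ℕ) where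
  Lam : Type
  [instPO : PartialOrder Lam]
  [instFin : Finite Lam]
  p : Fin n → Lam
  surj : Function.Surjective p

attribute [instance] MultifoliateStructure.instPO MultifoliateStructure.instFin


set_option linter.unusedSectionVars false

section Aux

variable {n : ℕ} {Λ : Type} [PartialOrder Λ]

/-- Transvection `x ↦ x + x i • e j` as a linear equivalence (for `i ≠ j`). -/
noncomputable def transv (i j : Fin n) (hij : i ≠ j) : (Fin n → ℝ) ≃ₗ[ℝ] (Fin n → ℝ) where
  toFun x := x + x i • (Pi.single j 1 : Fin n → ℝ)
  invFun x := x - x i • (Pi.single j 1 : Fin n → ℝ)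
  map_add' a b := by
    funext k; simp only [Pi.add_apply, Pi.smul_apply, Pi.single_apply, smul_eq_mul]
    split_ifs <;> ring
  map_smul' c a := by
    funext k; simp only [Pi.add_apply, Pi.smul_apply, Pi.single_apply, smul_eq_mul,
      RingHom.id_apply]
    split_ifs <;> ring
  left_inv x := by
    have h : (x + x i • (Pi.single j 1 : Fin n → ℝ)) i = x i := by
      simp [Pi.single_eq_of_ne hij]
    funext k
    simp only [Pi.sub_apply, Pi.add_apply, Pi.smul_apply, h]
    ring
  right_inv x := by
    have h : (x - x i • (Pi.single j 1 : Fin n → ℝ)) i = x i := by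
      simp [Pi.single_eq_of_ne hij]
    funext k
    simp only [Pi.sub_apply, Pi.add_apply, Pi.smul_apply, h]
    ring

/-- Dilation by 2 at coordinate `i` as a linear equivalence. -/
noncomputable def dil (i : Fin n) : (Fin n → ℝ) ≃ₗ[ℝ] (Fin n → ℝ) where
  toFun x := x + x i • (Pi.single i 1 : Fin n → ℝ)
  invFun x := x - (x i / 2) • (Pi.single i 1 : Fin n → ℝ)
  map_add' a b := by
    funext k; simp only [Pi.add_apply, Pi.smul_apply, Pi.single_apply, smul_eq_mul]
    split_ifs <;> ring
  map_smul' c a := by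
    funext k; simp only [Pi.add_apply, Pi.smul_apply, Pi.single_apply, smul_eq_mul,
      RingHom.id_apply]
    split_ifs <;> ring
  left_inv x := by
    funext k
    simp only [Pi.sub_apply, Pi.add_apply, Pi.smul_apply, Pi.single_apply, smul_eq_mul]
    split_ifs with hk
    · subst hk; ring
    · ring
  right_inv x := by
    funext k
    simp only [Pi.sub_apply, Pi.add_apply, Pi.smul_apply, Pi.single_apply, smul_eq_mul]
    split_ifs with hk
    · subst hk; ring
    · ring

lemma transv_apply (i j : Fin n) (hij : i ≠ j) (x : Fin n → ℝ) :
    transv i j hij x = x + x i • (Pi.single j 1 : Fin n → ℝ) := rfl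

lemma dil_apply (i : Fin n) (x : Fin n → ℝ) :
    dil i x = x + x i • (Pi.single i 1 : Fin n → ℝ) := rfl

lemma transv_mem_GLmf {p : Fin n → Λ} {i j : Fin n} (hij : i ≠ j) (hle : p i ≤ p j) :
    transv i j hij ∈ GLmf p := by
  intro k l hkl
  rw [transv_apply]
  have hlk : l ≠ k := fun h => hkl (h ▸ le_refl _)
  have h2 : ¬(l = i ∧ k = j) := by rintro ⟨rfl, rfl⟩; exact hkl hle
  simp only [Pi.add_apply, Pi.smul_apply, smul_eq_mul, Pi.single_apply]
  split_ifs <;> subst_vars <;> (first | ring1 | simp_all)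

lemma dil_mem_GLmf {p : Fin n → Λ} (i : Fin n) : dil i ∈ GLmf p := by
  intro k l hkl
  rw [dil_apply]
  have hlk : l ≠ k := fun h => hkl (h ▸ le_refl _)
  simp only [Pi.add_apply, Pi.smul_apply, smul_eq_mul, Pi.single_apply]
  split_ifs <;> subst_vars <;> (first | ring1 | simp_all)

section Aux2

variable {n : ℕ} {Λ : Type} [PartialOrder Λ]

/-- Coordinate subspace attached to a set of indices. -/
def Ksub (p : Fin n → Λ) (s : Set Λ) : Submodule ℝ (Fin n → ℝ) where
  carrier := {x | ∀ i : Fin n, p i ∈ s → x i = 0}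
  add_mem' := by intro a b ha hb i hi; simp [ha i hi, hb i hi]
  zero_mem' := by intro i hi; rfl
  smul_mem' := by intro c a ha i hi; simp [ha i hi]

lemma mem_Ksub {p : Fin n → Λ} {s : Set Λ} {x : Fin n → ℝ} :
    x ∈ Ksub p s ↔ ∀ i : Fin n, p i ∈ s → x i = 0 := Iff.rfl

lemma single_mem_Ksub {p : Fin n → Λ} {s : Set Λ} {i : Fin n} (hi : p i ∉ s) :
    (Pi.single i 1 : Fin n → ℝ) ∈ Ksub p s := by
  intro j hj
  rcases eq_or_ne j i with rfl | hne
  · exact absurd hj hi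
  · exact Pi.single_eq_of_ne hne 1

lemma apply_eq_sum (g : (Fin n → ℝ) ≃ₗ[ℝ] (Fin n → ℝ)) (x : Fin n → ℝ) (i : Fin n) :
    g x i = ∑ j, x j * g (Pi.single j 1) i := by
  have hx : x = ∑ j, x j • (Pi.single j 1 : Fin n → ℝ) := by
    funext k
    simp [Finset.sum_apply, Pi.single_apply]
  conv_lhs => rw [hx]
  rw [map_sum]
  simp [Finset.sum_apply, smul_eq_mul]

/-- `Ksub p s` is `GLmf p`-invariant when `s` is a lower set. -/
lemma Ksub_invariant {p : Fin n → Λ} {s : Set Λ} (hs : IsLowerSet s) :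
    ∀ g ∈ GLmf p, ∀ x ∈ Ksub p s, g x ∈ Ksub p s := by
  intro g hg x hx i hi
  rw [apply_eq_sum]
  apply Finset.sum_eq_zero
  intro j _
  by_cases hj : p j ∈ s
  · simp [hx j hj]
  · by_cases hle : p j ≤ p i
    · exact absurd (hs hle hi) hj
    · simp [hg i j hle]

/-- Every `GLmf p`-invariant subspace is of the form `Ksub p s` for a lower set `s`. -/
lemma invariant_eq_Ksub {p : Fin n → Λ} (hp : Function.Surjective p)
    (K : Submodule ℝ (Fin n → ℝ)) (hK : ∀ g ∈ GLmf p, ∀ x ∈ K, g x ∈ K) :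
    ∃ s : Set Λ, IsLowerSet s ∧ K = Ksub p s := by
  classical
  -- (a) coordinates of members of K give basis vectors in K
  have ha : ∀ x ∈ K, ∀ i : Fin n, x i ≠ 0 → (Pi.single i 1 : Fin n → ℝ) ∈ K := by
    intro x hx i hxi
    have h1 : dil i x ∈ K := hK _ (dil_mem_GLmf i) x hx
    have h2 : dil i x - x = x i • (Pi.single i 1 : Fin n → ℝ) := by
      rw [dil_apply]; abel
    have h3 : x i • (Pi.single i 1 : Fin n → ℝ) ∈ K := h2 ▸ K.sub_mem h1 hx
    have := K.smul_mem (x i)⁻¹ h3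
    rwa [smul_smul, inv_mul_cancel₀ hxi, one_smul] at this
  -- (b) upward propagation
  have hb : ∀ i j : Fin n, p i ≤ p j → (Pi.single i 1 : Fin n → ℝ) ∈ K →
      (Pi.single j 1 : Fin n → ℝ) ∈ K := by
    intro i j hle hi
    rcases eq_or_ne i j with rfl | hij
    · exact hi
    · have h1 : transv i j hij (Pi.single i 1) ∈ K :=
        hK _ (transv_mem_GLmf hij hle) _ hi
      have h2 : transv i j hij (Pi.single i 1) =
          (Pi.single i 1 : Fin n → ℝ) + (Pi.single j 1 : Fin n → ℝ) := by
        rw [transv_apply]; simp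
      rw [h2] at h1
      have := K.sub_mem h1 hi
      simpa using this
  refine ⟨{α | ∃ i : Fin n, p i = α ∧ (Pi.single i 1 : Fin n → ℝ) ∉ K}, ?_, ?_⟩
  · -- lower set
    rintro α β hβα ⟨j, hj, hjK⟩
    obtain ⟨i, hi⟩ := hp β
    refine ⟨i, hi, fun hiK => hjK ?_⟩
    exact hb i j (by rw [hi, hj]; exact hβα) hiK
  · -- K = Ksub p s
    have key : ∀ i : Fin n,
        (p i ∈ {α | ∃ i' : Fin n, p i' = α ∧ (Pi.single i' 1 : Fin n → ℝ) ∉ K}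
          ↔ (Pi.single i 1 : Fin n → ℝ) ∉ K) := by
      intro i
      constructor
      · rintro ⟨i', hi', hi'K⟩ hiK
        exact hi'K (hb i i' (le_of_eq hi'.symm) hiK)
      · intro hiK
        exact ⟨i, rfl, hiK⟩
    apply le_antisymm
    · intro x hx i hi
      by_contra hxi
      exact (key i).1 hi (ha x hx i hxi)
    · intro x hx
      have hxr : x = ∑ j, Pi.single j (x j) := (Finset.univ_sum_single x).symm
      rw [hxr]
      apply K.sum_mem
      intro j _
      by_cases hjK : (Pi.single j 1 : Fin n → ℝ) ∈ K
      · have : Pi.single j (x j) = x j • (Pi.single j 1 : Fin n → ℝ) := by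
          funext k; simp [Pi.single_apply]
        rw [this]
        exact K.smul_mem _ hjK
      · have : x j = 0 := hx j ((key j).2 hjK)
        rw [this]
        simp
  
/-- Order reversal for coordinate subspaces. -/
lemma Ksub_le_iff {p : Fin n → Λ} (hp : Function.Surjective p) {s t : Set Λ} :
    Ksub p s ≤ Ksub p t ↔ t ⊆ s := by
  constructor
  · intro hle α hα
    by_contra hαs
    obtain ⟨i, rfl⟩ := hp α
    have h1 : (Pi.single i 1 : Fin n → ℝ) ∈ Ksub p s := single_mem_Ksub hαs
    have h2 := hle h1 i hα
    simp at h2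
  · intro hts x hx i hi
    exact hx i (hts hi)

lemma Ksub_injective {p : Fin n → Λ} (hp : Function.Surjective p) {s t : Set Λ}
    (h : Ksub p s = Ksub p t) : s = t :=
  Set.Subset.antisymm ((Ksub_le_iff hp).1 h.ge) ((Ksub_le_iff hp).1 h.le)

/-- Mapping a submodule through `φ` and back gives it back. -/
lemma map_map_symm_cancel {n : ℕ} (φ : (Fin n → ℝ) ≃ₗ[ℝ] (Fin n → ℝ))
    (K : Submodule ℝ (Fin n → ℝ)) :
    (K.map (φ : (Fin n → ℝ) →ₗ[ℝ] (Fin n → ℝ))).map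
      (φ.symm : (Fin n → ℝ) →ₗ[ℝ] (Fin n → ℝ)) = K := by
  ext y
  simp only [Submodule.mem_map]
  constructor
  · rintro ⟨z, ⟨x, hx, rfl⟩, rfl⟩
    simpa using hx
  · intro hy
    exact ⟨φ y, ⟨y, hy, rfl⟩, by simp⟩

lemma map_symm_map_cancel {n : ℕ} (φ : (Fin n → ℝ) ≃ₗ[ℝ] (Fin n → ℝ))
    (K : Submodule ℝ (Fin n → ℝ)) :
    (K.map (φ.symm : (Fin n → ℝ) →ₗ[ℝ] (Fin n → ℝ))).map
      (φ : (Fin n → ℝ) →ₗ[ℝ] (Fin n → ℝ)) = K := by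
  have := map_map_symm_cancel φ.symm K
  rwa [φ.symm_symm] at this

/-- Conjugation by `φ` transports invariance of subspaces. -/
lemma invariant_map_iff {n : ℕ} {Λ Ω : Type} [PartialOrder Λ] [PartialOrder Ω]
    {p : Fin n → Λ} {q : Fin n → Ω}
    {φ : (Fin n → ℝ) ≃ₗ[ℝ] (Fin n → ℝ)}
    (hφ : Set.BijOn (fun f => (φ.symm.trans f).trans φ) (GLmf p) (GLmf q))
    (K : Submodule ℝ (Fin n → ℝ)) :
    (∀ g ∈ GLmf p, ∀ x ∈ K, g x ∈ K) ↔
      (∀ g ∈ GLmf q, ∀ y ∈ K.map (φ : (Fin n → ℝ) →ₗ[ℝ] (Fin n → ℝ)),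
        g y ∈ K.map (φ : (Fin n → ℝ) →ₗ[ℝ] (Fin n → ℝ))) := by
  constructor
  · intro hK g hg y hy
    obtain ⟨f, hf, hfg⟩ := hφ.surjOn hg
    obtain ⟨x, hx, rfl⟩ := hy
    refine ⟨f x, hK f hf x hx, ?_⟩
    rw [← hfg]
    simp [LinearEquiv.trans_apply]
  · intro hK' f hf x hx
    have hg := hφ.mapsTo hf
    have h1 := hK' _ hg (φ x) ⟨x, hx, rfl⟩
    have h2 : ((φ.symm.trans f).trans φ) (φ x) = φ (f x) := by
      simp [LinearEquiv.trans_apply]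
    rw [h2] at h1
    obtain ⟨z, hz, hzx⟩ := h1
    rwa [← φ.injective hzx]

/-- An order isomorphism of lattices preserves sup-irreducibility. -/
lemma supIrred_map {α β : Type*} [Lattice α] [Lattice β] (e : α ≃o β) {a : α}
    (ha : SupIrred a) : SupIrred (e a) := by
  refine ⟨fun hmin => ha.1 (e.isMin_apply.1 hmin), fun b c hbc => ?_⟩
  have h : e.symm b ⊔ e.symm c = a := by
    rw [← e.symm.map_sup, hbc, e.symm_apply_apply]
  rcases ha.2 h with h' | h'
  · left; rw [← e.apply_symm_apply b, h']
  · right; rw [← e.apply_symm_apply c, h']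

/-- Equivalent multifoliate structures have order-isomorphic
index posets. -/
theorem stmt_14 {n : ℕ} {Λ Ω : Type} [PartialOrder Λ] [PartialOrder Ω]
    [Finite Λ] [Finite Ω]
    (p : Fin n → Λ) (q : Fin n → Ω)
    (hp : Function.Surjective p) (hq : Function.Surjective q)
    (h : MFEquiv p q) :
    Nonempty (Λ ≃o Ω) := by
  classical
  obtain ⟨φ, hφ⟩ := h
  have hF : ∀ s : LowerSet Λ, ∃ t : Set Ω, IsLowerSet t ∧
      (Ksub p s.1).map (φ : (Fin n → ℝ) →ₗ[ℝ] (Fin n → ℝ)) = Ksub q t := by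
    intro s
    apply invariant_eq_Ksub hq
    exact (invariant_map_iff hφ _).1 (Ksub_invariant s.2)
  have hG : ∀ t : LowerSet Ω, ∃ s : Set Λ, IsLowerSet s ∧
      (Ksub q t.1).map (φ.symm : (Fin n → ℝ) →ₗ[ℝ] (Fin n → ℝ)) = Ksub p s := by
    intro t
    apply invariant_eq_Ksub hp
    rw [invariant_map_iff hφ, map_symm_map_cancel]
    exact Ksub_invariant t.2
  choose F hF1 hF2 using hF
  choose G hG1 hG2 using hG
  set F' : LowerSet Λ → LowerSet Ω := fun s => ⟨F s, hF1 s⟩ with hF'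
  set G' : LowerSet Ω → LowerSet Λ := fun t => ⟨G t, hG1 t⟩ with hG'
  have li : ∀ s : LowerSet Λ, G' (F' s) = s := by
    intro s
    have h1 : (Ksub q (F' s).1).map (φ.symm : (Fin n → ℝ) →ₗ[ℝ] (Fin n → ℝ))
        = Ksub p s.1 := by
      rw [show Ksub q (F' s).1 = (Ksub p s.1).map (φ : (Fin n → ℝ) →ₗ[ℝ] (Fin n → ℝ))
        from (hF2 s).symm, map_map_symm_cancel]
    have h2 := hG2 (F' s)
    rw [h1] at h2
    exact LowerSet.ext (Ksub_injective hp h2.symm)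
  have ri : ∀ t : LowerSet Ω, F' (G' t) = t := by
    intro t
    have h1 : (Ksub p (G' t).1).map (φ : (Fin n → ℝ) →ₗ[ℝ] (Fin n → ℝ))
        = Ksub q t.1 := by
      rw [show Ksub p (G' t).1 = (Ksub q t.1).map (φ.symm : (Fin n → ℝ) →ₗ[ℝ] (Fin n → ℝ))
        from (hG2 t).symm, map_symm_map_cancel]
    have h2 := hF2 (G' t)
    rw [h1] at h2
    exact LowerSet.ext (Ksub_injective hq h2.symm)
  have Fmono : ∀ {s t : LowerSet Λ}, s ≤ t → F' s ≤ F' t := by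
    intro s t hst
    have h1 : Ksub p t.1 ≤ Ksub p s.1 := (Ksub_le_iff hp).2 hst
    have h2 : (Ksub p t.1).map (φ : (Fin n → ℝ) →ₗ[ℝ] (Fin n → ℝ)) ≤
        (Ksub p s.1).map (φ : (Fin n → ℝ) →ₗ[ℝ] (Fin n → ℝ)) := Submodule.map_mono h1
    rw [hF2 s, hF2 t] at h2
    exact (Ksub_le_iff hq).1 h2
  have Gmono : ∀ {s t : LowerSet Ω}, s ≤ t → G' s ≤ G' t := by
    intro s t hst
    have h1 : Ksub q t.1 ≤ Ksub q s.1 := (Ksub_le_iff hq).2 hst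
    have h2 : (Ksub q t.1).map (φ.symm : (Fin n → ℝ) →ₗ[ℝ] (Fin n → ℝ)) ≤
        (Ksub q s.1).map (φ.symm : (Fin n → ℝ) →ₗ[ℝ] (Fin n → ℝ)) := Submodule.map_mono h1
    rw [hG2 s, hG2 t] at h2
    exact (Ksub_le_iff hp).1 h2
  let eLow : LowerSet Λ ≃o LowerSet Ω :=
    { toFun := F'
      invFun := G'
      left_inv := li
      right_inv := ri
      map_rel_iff' := by
        intro s t
        constructor
        · intro hst
          have h2 := Gmono (show F' s ≤ F' t from hst)
          rwa [li, li] at h2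
        · exact Fmono }
  let E : {s : LowerSet Λ // SupIrred s} ≃o {t : LowerSet Ω // SupIrred t} :=
    { toFun := fun s => ⟨eLow s.1, supIrred_map eLow s.2⟩
      invFun := fun t => ⟨eLow.symm t.1, supIrred_map eLow.symm t.2⟩
      left_inv := fun s => Subtype.ext (eLow.symm_apply_apply s.1)
      right_inv := fun t => Subtype.ext (eLow.apply_symm_apply t.1)
      map_rel_iff' := by
        intro a b
        simp [Subtype.mk_le_mk] }
  exact ⟨(OrderIso.supIrredLowerSet.trans E).trans OrderIso.supIrredLowerSet.symm⟩
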